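/- Let (X,φ) and (Y,ψ) be Smale spaces. Suppose there exist a homeomorphism h : X → Y, a continuous function c₁ : X → ℤ, and a nonnegative integer K such that (ψ^{c₁(x)}(h(x)), h(φ(x))) ∈ G_ψ^{a,K} for all x ∈ X. Then for each n ∈ ℤ there exists a nonnegative integer K_n such that (ψ^{c₁^n(x)}(h(x)), h(φ^n(x))) ∈ G_ψ^{a,K_n} for all x ∈ X. -/

import Mathlib

open Filter Set Topology

noncomputable section

/-- Integer iterate of a homeomorphism. -/
def hIter {X : Type*} [TopologicalSpace X] (φ : X ≃ₜ X) (n : ℤ) (x : X) : X :=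
  ((φ.toEquiv : Equiv.Perm X) ^ n) x

/-- The cocycle sums `f^n` of a function `f : X → ℤ` along the iterates of `φ`:
`f^n(x) = Σ_{i=0}^{n-1} f(φ^i(x))` for `n > 0`, `f^0 = 0`, and
`f^n(x) = −Σ_{i=n}^{-1} f(φ^i(x))` for `n < 0`. -/
def cSum {X : Type*} [TopologicalSpace X] (φ : X ≃ₜ X) (f : X → ℤ) (n : ℤ) (x : X) : ℤ :=
  if 0 ≤ n then ∑ i ∈ Finset.range n.toNat, f (hIter φ i x)
  else -∑ i ∈ Finset.range (-n).toNat, f (hIter φ (n + i) x)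

/-- Stable asymptotic pairs (limit definition). -/
def asympS {X : Type*} [MetricSpace X] (φ : X ≃ₜ X) : Set (X × X) :=
  {p | Tendsto (fun n : ℕ => dist (hIter φ n p.1) (hIter φ n p.2)) atTop (nhds 0)}

/-- Unstable asymptotic pairs (limit definition). -/
def asympU {X : Type*} [MetricSpace X] (φ : X ≃ₜ X) : Set (X × X) :=
  {p | Tendsto (fun n : ℕ => dist (hIter φ (-(n : ℤ)) p.1) (hIter φ (-(n : ℤ)) p.2))
    atTop (nhds 0)}

/-- Asymptotic pairs (limit definition). -/
def asympA {X : Type*} [MetricSpace X] (φ : X ≃ₜ X) : Set (X × X) := asympS φ ∩ asympU φ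

/-- The `ω`-limit set of `x`. -/
def omegaSet {X : Type*} [MetricSpace X] (φ : X ≃ₜ X) (x : X) : Set X :=
  {z | ∃ n : ℕ → ℕ, StrictMono n ∧ Tendsto (fun i => hIter φ (n i) x) atTop (nhds z)}

/-- The `α`-limit set of `x`. -/
def alphaSet {X : Type*} [MetricSpace X] (φ : X ≃ₜ X) (x : X) : Set X :=
  {z | ∃ n : ℕ → ℤ, StrictAnti n ∧ Tendsto (fun i => hIter φ (n i) x) atTop (nhds z)}

/-- A Smale space structure on a compact metric space `X`. -/
structure SmaleSpace (X : Type*) [MetricSpace X] [CompactSpace X] where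
  phi : X ≃ₜ X
  eps : ℝ
  lam : ℝ
  br : X → X → X
  eps_pos : 0 < eps
  lam_pos : 0 < lam
  lam_lt_one : lam < 1
  br_cont : ContinuousOn (fun p : X × X => br p.1 p.2) {p : X × X | dist p.1 p.2 < eps}
  br_self : ∀ x : X, br x x = x
  br_assoc_left : ∀ x y z : X, dist x y < eps → dist (br x y) z < eps → dist x z < eps →
    br (br x y) z = br x z
  br_assoc_right : ∀ x y z : X, dist y z < eps → dist x (br y z) < eps → dist x z < eps →
    br x (br y z) = br x z
  phi_br : ∀ x y : X, dist x y < eps → dist (phi x) (phi y) < eps →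
    phi (br x y) = br (phi x) (phi y)
  contract_s : ∀ x y z : X, br y x = y → dist x y < eps → br z x = z → dist x z < eps →
    dist (phi y) (phi z) ≤ lam * dist y z
  contract_u : ∀ x y z : X, br x y = y → dist x y < eps → br x z = z → dist x z < eps →
    dist (phi.symm y) (phi.symm z) ≤ lam * dist y z

namespace SmaleSpace

variable {X Y : Type*} [MetricSpace X] [CompactSpace X] [MetricSpace Y] [CompactSpace Y]

/-- Local stable set `X^s(x,ε)`. -/
def Xs (S : SmaleSpace X) (x : X) (ε : ℝ) : Set X := {y | S.br y x = y ∧ dist x y < ε}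

/-- Local unstable set `X^u(x,ε)`. -/
def Xu (S : SmaleSpace X) (x : X) (ε : ℝ) : Set X := {y | S.br x y = y ∧ dist x y < ε}

def Gs0 (S : SmaleSpace X) : Set (X × X) := {p | p.2 ∈ S.Xs p.1 S.eps}

def Gu0 (S : SmaleSpace X) : Set (X × X) := {p | p.2 ∈ S.Xu p.1 S.eps}

/-- `G_φ^{s,n} = (φ×φ)^{-n}(G_φ^{s,0})`. -/
def GsN (S : SmaleSpace X) (n : ℤ) : Set (X × X) :=
  {p | (hIter S.phi n p.1, hIter S.phi n p.2) ∈ S.Gs0}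

/-- `G_φ^{u,n} = (φ×φ)^{n}(G_φ^{u,0})`. -/
def GuN (S : SmaleSpace X) (n : ℤ) : Set (X × X) :=
  {p | (hIter S.phi (-n) p.1, hIter S.phi (-n) p.2) ∈ S.Gu0}

def GaN (S : SmaleSpace X) (n : ℤ) : Set (X × X) := S.GsN n ∩ S.GuN n

/-- The asymptotic equivalence relation `G_φ^a = ⋃_{n ≥ 0} G_φ^{a,n}`. -/
def Ga (S : SmaleSpace X) : Set (X × X) := ⋃ n : ℕ, S.GaN n

lemma gaN_subset_ga (S : SmaleSpace X) (n : ℕ) : S.GaN n ⊆ S.Ga :=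
  Set.subset_iUnion (fun k : ℕ => S.GaN k) n

/-- The inductive limit topology on `G_φ^a`: a set is open iff its intersection with each
`G_φ^{a,n}` is open in the subspace topology from `X × X`. -/
def gaTopology (S : SmaleSpace X) : TopologicalSpace ↥S.Ga :=
  ⨆ n : ℕ, TopologicalSpace.coinduced (Set.inclusion (S.gaN_subset_ga n)) inferInstance

/-- Irreducibility of a Smale space. -/
def Irreducible (S : SmaleSpace X) : Prop :=
  ∀ U V : Set X, IsOpen U → U.Nonempty → IsOpen V → V.Nonempty →
    ∃ K : ℕ, ((hIter S.phi K '' U) ∩ V).Nonempty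

def IsPeriodicPoint (S : SmaleSpace X) (x : X) : Prop :=
  ∃ p : ℕ, 0 < p ∧ hIter S.phi p x = x

/-- `h` is a flip conjugacy between `(X,φ)` and `(Y,ψ)`. -/
def IsFlipConjugacy (S : SmaleSpace X) (T : SmaleSpace Y) (h : X ≃ₜ Y) : Prop :=
  (∀ x, h (S.phi x) = T.phi (h x)) ∨ (∀ x, h (S.phi x) = T.phi.symm (h x))

def FlipConjugate (S : SmaleSpace X) (T : SmaleSpace Y) : Prop :=
  ∃ h : X ≃ₜ Y, IsFlipConjugacy S T h

/-- An isomorphism of the principal étale groupoids `G_φ^a` and `G_ψ^a`: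
a bijection which is a homeomorphism for the inductive limit topologies and preserves
the (equivalence relation) groupoid structure. -/
structure GaIso (S : SmaleSpace X) (T : SmaleSpace Y) where
  toEquiv : ↥S.Ga ≃ ↥T.Ga
  cont : @Continuous _ _ S.gaTopology T.gaTopology toEquiv
  cont_symm : @Continuous _ _ T.gaTopology S.gaTopology toEquiv.symm
  map_mul : ∀ p q r : ↥S.Ga, (p : X × X).2 = (q : X × X).1 →
    (r : X × X) = ((p : X × X).1, (q : X × X).2) →
    (toEquiv p : Y × Y).2 = (toEquiv q : Y × Y).1 ∧
      (toEquiv r : Y × Y) = ((toEquiv p : Y × Y).1, (toEquiv q : Y × Y).2)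

end SmaleSpace

section AuxIterate

variable {Z : Type*} [TopologicalSpace Z]

lemma hIter_add (φ : Z ≃ₜ Z) (a b : ℤ) (x : Z) :
    hIter φ (a + b) x = hIter φ a (hIter φ b x) := by
  simp [hIter, zpow_add, Equiv.Perm.mul_apply]

lemma hIter_zero (φ : Z ≃ₜ Z) (x : Z) : hIter φ 0 x = x := by
  simp [hIter]

lemma hIter_one (φ : Z ≃ₜ Z) (x : Z) : hIter φ 1 x = φ x := by
  simp [hIter]

lemma hIter_succ (φ : Z ≃ₜ Z) (m : ℤ) (x : Z) :
    hIter φ (m + 1) x = φ (hIter φ m x) := by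
  rw [add_comm, hIter_add, hIter_one]

lemma hIter_symm (φ : Z ≃ₜ Z) (n : ℤ) (x : Z) :
    hIter φ.symm n x = hIter φ (-n) x := by
  have h : (φ.symm.toEquiv : Equiv.Perm Z) = (φ.toEquiv : Equiv.Perm Z)⁻¹ := rfl
  simp [hIter, h, inv_zpow, ← zpow_neg]

end AuxIterate

namespace SmaleSpace

variable {Y : Type*} [MetricSpace Y] [CompactSpace Y] (T : SmaleSpace Y)

lemma mem_gs0 {y w : Y} : (y, w) ∈ T.Gs0 ↔ T.br w y = w ∧ dist y w < T.eps := Iff.rfl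

lemma mem_gu0 {y w : Y} : (y, w) ∈ T.Gu0 ↔ T.br y w = w ∧ dist y w < T.eps := Iff.rfl

lemma gs0_step {y w : Y} (h : (y, w) ∈ T.Gs0) :
    (T.phi y, T.phi w) ∈ T.Gs0 ∧ dist (T.phi y) (T.phi w) ≤ T.lam * dist y w := by
  obtain ⟨hb, hd⟩ := h
  have hc : dist (T.phi w) (T.phi y) ≤ T.lam * dist w y :=
    T.contract_s y w y hb hd (T.br_self y) (by simpa using T.eps_pos)
  have hd' : dist (T.phi y) (T.phi w) ≤ T.lam * dist y w := by
    rw [dist_comm, dist_comm y w]; exact hc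
  have hlt : dist (T.phi y) (T.phi w) < T.eps := by
    have h1 : T.lam * dist y w ≤ dist y w :=
      mul_le_of_le_one_left dist_nonneg T.lam_lt_one.le
    linarith
  have hbr : T.phi (T.br w y) = T.br (T.phi w) (T.phi y) :=
    T.phi_br w y (by rwa [dist_comm]) (by rwa [dist_comm])
  refine ⟨⟨?_, hlt⟩, hd'⟩
  rw [← hbr, hb]

lemma gu0_step {y w : Y} (h : (y, w) ∈ T.Gu0)
    (hd : dist (T.phi y) (T.phi w) < T.eps) : (T.phi y, T.phi w) ∈ T.Gu0 := by
  obtain ⟨hb, hdyw⟩ := h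
  have hbr : T.phi (T.br y w) = T.br (T.phi y) (T.phi w) := T.phi_br y w hdyw hd
  exact ⟨by rw [← hbr, hb], hd⟩

lemma gs0_iter {y w : Y} (h : (y, w) ∈ T.Gs0) (n : ℕ) :
    (hIter T.phi n y, hIter T.phi n w) ∈ T.Gs0 ∧
      dist (hIter T.phi n y) (hIter T.phi n w) ≤ T.lam ^ n * dist y w := by
  induction n with
  | zero => simpa [hIter_zero] using h
  | succ n ih =>
    have e : ∀ z : Y, hIter T.phi (n + 1 : ℕ) z = T.phi (hIter T.phi n z) := by
      intro z; rw [show ((n + 1 : ℕ) : ℤ) = (n : ℤ) + 1 by push_cast; ring, hIter_succ]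
    obtain ⟨hm, hdist⟩ := T.gs0_step ih.1
    refine ⟨by rw [e, e]; exact hm, ?_⟩
    rw [e, e]
    calc dist (T.phi (hIter T.phi n y)) (T.phi (hIter T.phi n w))
        ≤ T.lam * dist (hIter T.phi n y) (hIter T.phi n w) := hdist
      _ ≤ T.lam * (T.lam ^ n * dist y w) := by
          exact mul_le_mul_of_nonneg_left ih.2 T.lam_pos.le
      _ = T.lam ^ (n + 1) * dist y w := by ring

lemma gsN_mono {m m' : ℤ} (h : m ≤ m') : T.GsN m ⊆ T.GsN m' := by
  rintro ⟨a, b⟩ hab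
  have e : ∀ z : Y, hIter T.phi m' z = hIter T.phi ((m' - m).toNat : ℤ) (hIter T.phi m z) := by
    intro z
    rw [← hIter_add]
    congr 1
    omega
  show (hIter T.phi m' a, hIter T.phi m' b) ∈ T.Gs0
  rw [e, e]
  exact (T.gs0_iter hab _).1

/-- The time-reversed Smale space. -/
def rev (T : SmaleSpace Y) : SmaleSpace Y where
  phi := T.phi.symm
  eps := T.eps
  lam := T.lam
  br := fun x y => T.br y x
  eps_pos := T.eps_pos
  lam_pos := T.lam_pos
  lam_lt_one := T.lam_lt_one
  br_cont := by
    have : ContinuousOn ((fun p : Y × Y => T.br p.1 p.2) ∘ Prod.swap)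
        {p : Y × Y | dist p.1 p.2 < T.eps} := by
      refine T.br_cont.comp continuous_swap.continuousOn ?_
      intro p hp
      simpa [Prod.swap, dist_comm] using hp
    exact this
  br_self := T.br_self
  br_assoc_left := fun x y z h1 h2 h3 =>
    T.br_assoc_right z y x (by rwa [dist_comm]) (by rwa [dist_comm]) (by rwa [dist_comm])
  br_assoc_right := fun x y z h1 h2 h3 =>
    T.br_assoc_left z y x (by rwa [dist_comm]) (by rwa [dist_comm]) (by rwa [dist_comm])
  phi_br := by
    intro x y h1 h2
    have h2' : dist (T.phi.symm y) (T.phi.symm x) < T.eps := by rwa [dist_comm] at h2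
    have := T.phi_br (T.phi.symm y) (T.phi.symm x) h2' (by simpa [dist_comm] using h1)
    simp only [Homeomorph.apply_symm_apply] at this
    calc T.phi.symm (T.br y x) = T.phi.symm (T.phi (T.br (T.phi.symm y) (T.phi.symm x))) := by
          rw [this]
      _ = T.br (T.phi.symm y) (T.phi.symm x) := T.phi.symm_apply_apply _
  contract_s := fun x y z h1 h2 h3 h4 => T.contract_u x y z h1 h2 h3 h4
  contract_u := by
    intro x y z h1 h2 h3 h4
    have := T.contract_s x y z h1 h2 h3 h4
    simpa using this

lemma rev_gs0 : T.rev.Gs0 = T.Gu0 := rfl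

lemma rev_gu0 : T.rev.Gu0 = T.Gs0 := rfl

lemma rev_phi : T.rev.phi = T.phi.symm := rfl

lemma rev_gsN (n : ℤ) : T.rev.GsN n = T.GuN n := by
  ext p
  show (hIter T.phi.symm n p.1, hIter T.phi.symm n p.2) ∈ T.rev.Gs0 ↔ _
  rw [hIter_symm, hIter_symm, rev_gs0]
  exact Iff.rfl

lemma rev_guN (n : ℤ) : T.rev.GuN n = T.GsN n := by
  ext p
  show (hIter T.phi.symm (-n) p.1, hIter T.phi.symm (-n) p.2) ∈ T.rev.Gu0 ↔ _
  rw [hIter_symm, hIter_symm, rev_gu0, neg_neg]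
  exact Iff.rfl

lemma rev_gaN (n : ℤ) : T.rev.GaN n = T.GaN n := by
  rw [GaN, GaN, rev_gsN, rev_guN, Set.inter_comm]

lemma guN_mono {m m' : ℤ} (h : m ≤ m') : T.GuN m ⊆ T.GuN m' := by
  rw [← rev_gsN, ← rev_gsN]
  exact T.rev.gsN_mono h

lemma gaN_mono {m m' : ℤ} (h : m ≤ m') : T.GaN m ⊆ T.GaN m' :=
  Set.inter_subset_inter (T.gsN_mono h) (T.guN_mono h)

lemma gs0_symm {y w : Y} (h : (y, w) ∈ T.Gs0) : (w, y) ∈ T.Gs0 := by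
  obtain ⟨hb, hd⟩ := h
  have hd' : dist w y < T.eps := by rwa [dist_comm]
  refine ⟨?_, hd'⟩
  have := T.br_assoc_right y w y (by rwa [dist_comm] at hd) (by rw [hb]; exact hd)
    (by simpa using T.eps_pos)
  rw [hb, T.br_self] at this
  exact this

lemma gu0_symm {y w : Y} (h : (y, w) ∈ T.Gu0) : (w, y) ∈ T.Gu0 := by
  obtain ⟨hb, hd⟩ := h
  have hd' : dist w y < T.eps := by rwa [dist_comm]
  refine ⟨?_, hd'⟩
  have := T.br_assoc_left y w y hd (by rw [hb]; exact hd') (by simpa using T.eps_pos)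
  rw [hb, T.br_self] at this
  exact this

lemma gaN_symm {n : ℤ} {a b : Y} (h : (a, b) ∈ T.GaN n) : (b, a) ∈ T.GaN n :=
  ⟨T.gs0_symm h.1, T.gu0_symm h.2⟩

lemma gsN_shift {n : ℤ} (m : ℤ) {a b : Y} :
    (hIter T.phi m a, hIter T.phi m b) ∈ T.GsN n ↔ (a, b) ∈ T.GsN (n + m) := by
  show (hIter T.phi n (hIter T.phi m a), hIter T.phi n (hIter T.phi m b)) ∈ T.Gs0 ↔
    (hIter T.phi (n + m) a, hIter T.phi (n + m) b) ∈ T.Gs0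
  rw [hIter_add, hIter_add]

lemma guN_shift {n : ℤ} (m : ℤ) {a b : Y} :
    (hIter T.phi m a, hIter T.phi m b) ∈ T.GuN n ↔ (a, b) ∈ T.GuN (n - m) := by
  show (hIter T.phi (-n) (hIter T.phi m a), hIter T.phi (-n) (hIter T.phi m b)) ∈ T.Gu0 ↔
    (hIter T.phi (-(n - m)) a, hIter T.phi (-(n - m)) b) ∈ T.Gu0
  rw [← hIter_add, ← hIter_add, show (-n + m) = -(n - m) by ring]

lemma gaN_shift {k : ℤ} (m : ℤ) {a b : Y} (hab : (a, b) ∈ T.GaN k) :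
    (hIter T.phi m a, hIter T.phi m b) ∈ T.GaN (k + |m|) := by
  constructor
  · rw [gsN_shift]
    exact T.gsN_mono (by have := abs_nonneg m; have := neg_abs_le m; omega) hab.1
  · rw [guN_shift]
    exact T.guN_mono (by have := le_abs_self m; omega) hab.2

lemma br_near_diag (ε₀ : ℝ) (hε₀ : 0 < ε₀) :
    ∃ δ₀ > 0, δ₀ ≤ T.eps / 2 ∧ ∀ x y : Y, dist x y < δ₀ →
      dist (T.br x y) x < ε₀ ∧ dist (T.br x y) y < ε₀ := by
  have hep := T.eps_pos
  set C : Set (Y × Y) := {p | dist p.1 p.2 ≤ T.eps / 2} with hC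
  have hCclosed : IsClosed C := isClosed_le continuous_dist continuous_const
  have hCc : IsCompact C := hCclosed.isCompact
  have hsub : C ⊆ {p : Y × Y | dist p.1 p.2 < T.eps} := fun p hp =>
    lt_of_le_of_lt (show dist p.1 p.2 ≤ T.eps / 2 from hp) (by linarith)
  have hcont : ContinuousOn (fun p : Y × Y => T.br p.1 p.2) C := T.br_cont.mono hsub
  have huc := hCc.uniformContinuousOn_of_continuous hcont
  rw [Metric.uniformContinuousOn_iff] at huc
  obtain ⟨δ, hδpos, hδ⟩ := huc ε₀ hε₀
  refine ⟨min δ (T.eps / 2), by positivity, min_le_right _ _, ?_⟩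
  intro x y hxy
  have hxy1 : dist x y < δ := lt_of_lt_of_le hxy (min_le_left _ _)
  have hxy2 : dist x y < T.eps / 2 := lt_of_lt_of_le hxy (min_le_right _ _)
  have hxC : (x, y) ∈ C := le_of_lt hxy2
  have hxxC : (x, x) ∈ C := by simp [hC]; positivity
  have hyyC : (y, y) ∈ C := by simp [hC]; positivity
  have d1 : dist ((x, y) : Y × Y) (x, x) < δ := by
    rw [Prod.dist_eq]
    simp only [dist_self]
    exact sup_lt_iff.mpr ⟨hδpos, by rwa [dist_comm]⟩
  have d2 : dist ((x, y) : Y × Y) (y, y) < δ := by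
    rw [Prod.dist_eq]
    simp only [dist_self]
    exact sup_lt_iff.mpr ⟨hxy1, hδpos⟩
  have h1 := hδ (x, y) hxC (x, x) hxxC d1
  have h2 := hδ (x, y) hxC (y, y) hyyC d2
  constructor
  · simpa [T.br_self] using h1
  · simpa [T.br_self] using h2

lemma gs0_trans_aux {δ₀ : ℝ} (hδ : 0 < δ₀) (hδε : δ₀ ≤ T.eps / 2)
    (hbr : ∀ x y : Y, dist x y < δ₀ →
      dist (T.br x y) x < T.eps / 4 ∧ dist (T.br x y) y < T.eps / 4)
    {a b c : Y} (hab : (a, b) ∈ T.Gs0) (hbc : (b, c) ∈ T.Gs0)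
    (hd1 : dist a b < δ₀ / 2) (hd2 : dist b c < δ₀ / 2) : (a, c) ∈ T.Gs0 := by
  have hep := T.eps_pos
  have hl0 := T.lam_pos
  have hl1 := T.lam_lt_one
  set z := T.br c a with hzdef
  have hca : dist c a < δ₀ := by
    have := dist_triangle a b c
    rw [dist_comm]
    linarith
  have hcaε : dist c a < T.eps := lt_of_lt_of_le (by linarith) (by linarith : δ₀ ≤ T.eps)
  have hz1 : dist z c < T.eps / 4 := (hbr c a hca).1
  have hz2 : dist z a < T.eps / 4 := (hbr c a hca).2
  have hbz_a : T.br z a = z := by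
    have := T.br_assoc_left c a a hcaε (by rw [← hzdef]; linarith) hcaε
    rw [hzdef]
    exact this
  have haz : (a, z) ∈ T.Gs0 := ⟨hbz_a, by rw [dist_comm]; linarith⟩
  have hbz_u : T.br c z = z := by
    have := T.br_assoc_right c c a hcaε (by rw [← hzdef, dist_comm]; linarith) hcaε
    rw [hzdef, this]
  have hcz : (c, z) ∈ T.Gu0 := ⟨hbz_u, by rw [dist_comm]; linarith⟩
  -- distance bound along forward orbit
  have key : ∀ n : ℕ, dist (hIter T.phi n c) (hIter T.phi n z) ≤
      T.lam ^ n * (T.eps / 4 + δ₀) := by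
    intro n
    have h1 := (T.gs0_iter hab n).2
    have h2 := (T.gs0_iter hbc n).2
    have h3 := (T.gs0_iter haz n).2
    have hln : (0:ℝ) ≤ T.lam ^ n := by positivity
    have htri := dist_triangle4 (hIter T.phi n c) (hIter T.phi n b)
      (hIter T.phi n a) (hIter T.phi n z)
    rw [dist_comm (hIter T.phi (n:ℤ) c) (hIter T.phi (n:ℤ) b),
      dist_comm (hIter T.phi (n:ℤ) b) (hIter T.phi (n:ℤ) a)] at htri
    have hda : dist a b ≤ δ₀ / 2 := hd1.le
    have hdb : dist b c ≤ δ₀ / 2 := hd2.le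
    have hdz : dist a z ≤ T.eps / 4 := by rw [dist_comm]; exact hz2.le
    nlinarith [mul_le_mul_of_nonneg_left hda hln, mul_le_mul_of_nonneg_left hdb hln,
      mul_le_mul_of_nonneg_left hdz hln]
  have keyε : ∀ n : ℕ, dist (hIter T.phi n c) (hIter T.phi n z) < T.eps := by
    intro n
    have h1 : T.lam ^ n ≤ 1 := pow_le_one₀ hl0.le hl1.le
    have h2 : (0:ℝ) < T.eps / 4 + δ₀ := by linarith
    have := key n
    nlinarith
  have hmem : ∀ n : ℕ, (hIter T.phi n c, hIter T.phi n z) ∈ T.Gu0 := by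
    intro n
    induction n with
    | zero => simpa [hIter_zero] using hcz
    | succ n ih =>
      have e : ∀ w : Y, hIter T.phi ((n + 1 : ℕ) : ℤ) w = T.phi (hIter T.phi n w) := by
        intro w; rw [show ((n + 1 : ℕ) : ℤ) = (n : ℤ) + 1 by push_cast; ring, hIter_succ]
      rw [e, e]
      refine T.gu0_step ih ?_
      have := keyε (n + 1)
      rw [e, e] at this
      exact this
  have hcontr : ∀ n : ℕ, dist c z ≤ T.lam ^ n * dist (hIter T.phi n c) (hIter T.phi n z) := by
    intro n
    induction n with
    | zero => simp [hIter_zero]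
    | succ n ih =>
      have hm := hmem (n + 1)
      have hc := T.contract_u (hIter T.phi (n + 1 : ℕ) c) (hIter T.phi (n + 1 : ℕ) c)
        (hIter T.phi (n + 1 : ℕ) z) (T.br_self _) (by simpa using hep) hm.1 hm.2
      have e : ∀ w : Y, T.phi.symm (hIter T.phi ((n + 1 : ℕ) : ℤ) w) = hIter T.phi n w := by
        intro w
        rw [show ((n + 1 : ℕ) : ℤ) = (n : ℤ) + 1 by push_cast; ring, hIter_succ,
          T.phi.symm_apply_apply]
      rw [e, e] at hc
      have hln : (0:ℝ) ≤ T.lam ^ n := by positivity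
      calc dist c z ≤ T.lam ^ n * dist (hIter T.phi n c) (hIter T.phi n z) := ih
        _ ≤ T.lam ^ n * (T.lam * dist (hIter T.phi (n+1 : ℕ) c) (hIter T.phi (n+1 : ℕ) z)) :=
            mul_le_mul_of_nonneg_left hc hln
        _ = T.lam ^ (n + 1) * dist (hIter T.phi (n+1 : ℕ) c) (hIter T.phi (n+1 : ℕ) z) := by
            ring
  have hle : ∀ n : ℕ, dist c z ≤ T.lam ^ n * T.eps := by
    intro n
    have hln : (0:ℝ) ≤ T.lam ^ n := by positivity
    exact le_trans (hcontr n) (mul_le_mul_of_nonneg_left (keyε n).le hln)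
  have htend : Tendsto (fun n : ℕ => T.lam ^ n * T.eps) atTop (nhds 0) := by
    have := (tendsto_pow_atTop_nhds_zero_of_lt_one hl0.le hl1).mul_const T.eps
    simpa using this
  have hdcz : dist c z ≤ 0 := ge_of_tendsto' htend hle
  have hzc : z = c := by
    have : dist c z = 0 := le_antisymm hdcz dist_nonneg
    exact (dist_eq_zero.mp this).symm
  refine ⟨?_, by rw [dist_comm]; exact hcaε⟩
  show T.br c a = c
  rw [← hzdef, hzc]


lemma gsN_trans (J : ℤ) : ∃ J' : ℤ, J ≤ J' ∧ ∀ a b c : Y,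
    (a, b) ∈ T.GsN J → (b, c) ∈ T.GsN J → (a, c) ∈ T.GsN J' := by
  have hep := T.eps_pos
  have hl0 := T.lam_pos
  obtain ⟨δ₀, hδ0, hδε, hbr⟩ := T.br_near_diag (T.eps / 4) (by linarith)
  obtain ⟨m, hm⟩ := exists_pow_lt_of_lt_one (x := δ₀ / (2 * T.eps))
    (by positivity) T.lam_lt_one
  have hlm : (0:ℝ) < T.lam ^ m := by positivity
  have hmain : T.lam ^ m * T.eps < δ₀ / 2 := by
    calc T.lam ^ m * T.eps < δ₀ / (2 * T.eps) * T.eps := by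
          exact mul_lt_mul_of_pos_right hm hep
      _ = δ₀ / 2 := by field_simp
  refine ⟨J + m, by omega, ?_⟩
  intro a b c hab hbc
  have e : ∀ x : Y, hIter T.phi (J + m) x = hIter T.phi (m : ℤ) (hIter T.phi J x) := by
    intro x; rw [add_comm, hIter_add]
  have hab' : (hIter T.phi J a, hIter T.phi J b) ∈ T.Gs0 := hab
  have hbc' : (hIter T.phi J b, hIter T.phi J c) ∈ T.Gs0 := hbc
  have h1 := T.gs0_iter hab' m
  have h2 := T.gs0_iter hbc' m
  have hd1 : dist (hIter T.phi (m:ℤ) (hIter T.phi J a)) (hIter T.phi (m:ℤ) (hIter T.phi J b))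
      < δ₀ / 2 := by
    have hlt : dist (hIter T.phi J a) (hIter T.phi J b) < T.eps := hab'.2
    have := h1.2
    nlinarith
  have hd2 : dist (hIter T.phi (m:ℤ) (hIter T.phi J b)) (hIter T.phi (m:ℤ) (hIter T.phi J c))
      < δ₀ / 2 := by
    have hlt : dist (hIter T.phi J b) (hIter T.phi J c) < T.eps := hbc'.2
    have := h2.2
    nlinarith
  show (hIter T.phi (J + m) a, hIter T.phi (J + m) c) ∈ T.Gs0
  rw [e, e]
  exact T.gs0_trans_aux hδ0 hδε hbr h1.1 h2.1 hd1 hd2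

lemma guN_trans (J : ℤ) : ∃ J' : ℤ, J ≤ J' ∧ ∀ a b c : Y,
    (a, b) ∈ T.GuN J → (b, c) ∈ T.GuN J → (a, c) ∈ T.GuN J' := by
  obtain ⟨J', hJ, H⟩ := T.rev.gsN_trans J
  refine ⟨J', hJ, fun a b c h1 h2 => ?_⟩
  rw [← T.rev_gsN] at h1 h2 ⊢
  exact H a b c h1 h2

lemma gaN_trans (J : ℕ) : ∃ J' : ℕ, ∀ a b c : Y,
    (a, b) ∈ T.GaN (J : ℤ) → (b, c) ∈ T.GaN (J : ℤ) → (a, c) ∈ T.GaN (J' : ℤ) := by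
  obtain ⟨Js, hJs, Hs⟩ := T.gsN_trans J
  obtain ⟨Ju, hJu, Hu⟩ := T.guN_trans J
  refine ⟨(max Js Ju).toNat, fun a b c h1 h2 => ?_⟩
  constructor
  · exact T.gsN_mono (by omega) (Hs a b c h1.1 h2.1)
  · exact T.guN_mono (by omega) (Hu a b c h1.2 h2.2)


lemma gaN_refl (n : ℤ) (y : Y) : (y, y) ∈ T.GaN n :=
  ⟨⟨T.br_self _, by simpa using T.eps_pos⟩, ⟨T.br_self _, by simpa using T.eps_pos⟩⟩

end SmaleSpace

section CSumAux

variable {Z : Type*} [TopologicalSpace Z] (φ : Z ≃ₜ Z) (f : Z → ℤ)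

lemma cSum_zero (x : Z) : cSum φ f 0 x = 0 := by simp [cSum]

lemma cSum_natCast (n : ℕ) (x : Z) :
    cSum φ f n x = ∑ i ∈ Finset.range n, f (hIter φ i x) := by
  simp [cSum]

lemma cSum_add_one_nat (n : ℕ) (x : Z) :
    cSum φ f ((n : ℤ) + 1) x = cSum φ f n x + f (hIter φ n x) := by
  have h1 : ((n : ℤ) + 1) = ((n + 1 : ℕ) : ℤ) := by push_cast; ring
  rw [h1, cSum_natCast, cSum_natCast, Finset.sum_range_succ]

lemma cSum_neg_nat (n : ℕ) (x : Z) :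
    cSum φ f (-(n : ℤ)) x = -∑ i ∈ Finset.range n, f (hIter φ (-(n : ℤ) + i) x) := by
  cases n with
  | zero => simp [cSum]
  | succ k =>
    simp only [cSum]
    rw [if_neg (by omega)]
    simp only [neg_neg, Int.toNat_natCast]

lemma cSum_sub_one (n : ℕ) (x : Z) :
    cSum φ f (-(n : ℤ) - 1) x = cSum φ f (-(n : ℤ)) x - f (hIter φ (-(n : ℤ) - 1) x) := by
  have h1 : (-(n : ℤ) - 1) = -((n + 1 : ℕ) : ℤ) := by push_cast; ring
  rw [h1, cSum_neg_nat, cSum_neg_nat]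
  rw [Finset.sum_range_succ' (fun i : ℕ => f (hIter φ (-((n + 1 : ℕ) : ℤ) + i) x)) n]
  have e1 : ∀ i ∈ Finset.range n,
      f (hIter φ (-((n + 1 : ℕ) : ℤ) + ((i + 1 : ℕ) : ℤ)) x) =
        f (hIter φ (-(n : ℤ) + i) x) := by
    intro i _
    congr 2
    push_cast
    ring
  rw [Finset.sum_congr rfl e1]
  simp only [Nat.cast_zero, add_zero]
  ring

lemma exists_natAbs_bound {Z : Type*} [TopologicalSpace Z] [CompactSpace Z]
    (c : Z → ℤ) (hc : Continuous c) : ∃ B : ℕ, ∀ x, (c x).natAbs ≤ B := by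
  have hfin : (Set.range c).Finite := (isCompact_range hc).finite ⟨inferInstance⟩
  have hfin2 : (Set.range fun x => (c x).natAbs).Finite := by
    have he : (Set.range fun x => (c x).natAbs) = Int.natAbs '' Set.range c := by
      rw [← Set.range_comp]; rfl
    rw [he]
    exact hfin.image _
  obtain ⟨B, hB⟩ := hfin2.bddAbove
  exact ⟨B, fun x => hB (Set.mem_range_self x)⟩

end CSumAux



/-- If `(ψ^{c₁(x)}(h(x)), h(φ(x))) ∈ G_ψ^{a,K}` for all `x`, then for each
`n ∈ ℤ` there is `K_n ∈ ℤ_{≥0}` with `(ψ^{c₁^n(x)}(h(x)), h(φ^n(x))) ∈ G_ψ^{a,K_n}`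
for all `x`. -/
theorem gaN_iterate_bound {X Y : Type*} [MetricSpace X] [CompactSpace X]
    [MetricSpace Y] [CompactSpace Y] (S : SmaleSpace X) (T : SmaleSpace Y)
    (h : X ≃ₜ Y) (c₁ : X → ℤ) (hc₁ : Continuous c₁) (K : ℕ)
    (hK : ∀ x : X, (hIter T.phi (c₁ x) (h x), h (S.phi x)) ∈ T.GaN (K : ℤ)) :
    ∀ n : ℤ, ∃ Kn : ℕ, ∀ x : X,
      (hIter T.phi (cSum S.phi c₁ n x) (h x), h (hIter S.phi n x)) ∈ T.GaN (Kn : ℤ) := by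
  obtain ⟨B, hB⟩ := exists_natAbs_bound c₁ hc₁
  have habs : ∀ z : X, |c₁ z| ≤ (B : ℤ) := by
    intro z
    rw [Int.abs_eq_natAbs]
    exact_mod_cast hB z
  intro n
  induction n using Int.induction_on with
  | zero =>
    refine ⟨0, fun x => ?_⟩
    rw [cSum_zero, hIter_zero, hIter_zero]
    exact T.gaN_refl 0 (h x)
  | succ i ih =>
    obtain ⟨Kn, hKn⟩ := ih
    obtain ⟨J', hJ'⟩ := T.gaN_trans (max (Kn + B) K)
    refine ⟨J', fun x => ?_⟩
    set y := hIter S.phi (i : ℤ) x with hy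
    set m := c₁ y with hm
    have hmB : |m| ≤ (B : ℤ) := habs y
    have hcast : ∀ J : ℕ, J ≤ max (Kn + B) K → ((J : ℤ) ≤ ((max (Kn + B) K : ℕ) : ℤ)) := by
      intro J hJ; exact_mod_cast hJ
    have p1 : (hIter T.phi (cSum S.phi c₁ i x) (h x), h y) ∈ T.GaN (Kn : ℤ) := hKn x
    have p1' := T.gaN_shift m p1
    have e1 : hIter T.phi m (hIter T.phi (cSum S.phi c₁ i x) (h x)) =
        hIter T.phi (cSum S.phi c₁ ((i : ℤ) + 1) x) (h x) := by
      rw [← hIter_add, cSum_add_one_nat, ← hy, ← hm, add_comm]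
    rw [e1] at p1'
    have p1'' : (hIter T.phi (cSum S.phi c₁ ((i : ℤ) + 1) x) (h x), hIter T.phi m (h y)) ∈
        T.GaN ((max (Kn + B) K : ℕ) : ℤ) := by
      refine T.gaN_mono ?_ p1'
      have h2 := hcast (Kn + B) (le_max_left _ _)
      push_cast at h2 ⊢
      omega
    have p2 : (hIter T.phi m (h y), h (S.phi y)) ∈ T.GaN (K : ℤ) := hK y
    have p2' : (hIter T.phi m (h y), h (S.phi y)) ∈ T.GaN ((max (Kn + B) K : ℕ) : ℤ) :=
      T.gaN_mono (hcast K (le_max_right _ _)) p2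
    have eφ : S.phi y = hIter S.phi ((i : ℤ) + 1) x := by rw [hy, ← hIter_succ]
    rw [eφ] at p2'
    exact hJ' _ _ _ p1'' p2'
  | pred i ih =>
    obtain ⟨Kn, hKn⟩ := ih
    obtain ⟨J', hJ'⟩ := T.gaN_trans (max (Kn + B) (K + B))
    refine ⟨J', fun x => ?_⟩
    set y := hIter S.phi (-(i : ℤ) - 1) x with hy
    set m := c₁ y with hm
    have hmB : |m| ≤ (B : ℤ) := habs y
    have hcast : ∀ J : ℕ, J ≤ max (Kn + B) (K + B) →
        ((J : ℤ) ≤ ((max (Kn + B) (K + B) : ℕ) : ℤ)) := by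
      intro J hJ; exact_mod_cast hJ
    have p1 : (hIter T.phi (cSum S.phi c₁ (-(i : ℤ)) x) (h x), h (hIter S.phi (-(i : ℤ)) x)) ∈
        T.GaN (Kn : ℤ) := hKn x
    have p1' := T.gaN_shift (-m) p1
    have e1 : hIter T.phi (-m) (hIter T.phi (cSum S.phi c₁ (-(i : ℤ)) x) (h x)) =
        hIter T.phi (cSum S.phi c₁ (-(i : ℤ) - 1) x) (h x) := by
      rw [← hIter_add, cSum_sub_one, ← hy, ← hm]
      ring_nf
    rw [e1] at p1'
    have p1'' : (hIter T.phi (cSum S.phi c₁ (-(i : ℤ) - 1) x) (h x),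
        hIter T.phi (-m) (h (hIter S.phi (-(i : ℤ)) x))) ∈
        T.GaN ((max (Kn + B) (K + B) : ℕ) : ℤ) := by
      refine T.gaN_mono ?_ p1'
      have h2 := hcast (Kn + B) (le_max_left _ _)
      rw [abs_neg]
      push_cast at h2 ⊢
      omega
    have p2 : (hIter T.phi m (h y), h (S.phi y)) ∈ T.GaN (K : ℤ) := hK y
    have eφ : S.phi y = hIter S.phi (-(i : ℤ)) x := by
      rw [hy, ← hIter_succ, show (-(i : ℤ) - 1 + 1) = -(i : ℤ) by ring]
    rw [eφ] at p2
    have p2' := T.gaN_shift (-m) p2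
    have e2 : hIter T.phi (-m) (hIter T.phi m (h y)) = h y := by
      rw [← hIter_add, neg_add_cancel, hIter_zero]
    rw [e2] at p2'
    have p2'' : (hIter T.phi (-m) (h (hIter S.phi (-(i : ℤ)) x)), h y) ∈
        T.GaN ((max (Kn + B) (K + B) : ℕ) : ℤ) := by
      refine T.gaN_mono ?_ (T.gaN_symm p2')
      have h2 := hcast (K + B) (le_max_right _ _)
      rw [abs_neg]
      push_cast at h2 ⊢
      omega
    exact hJ' _ _ _ p1'' p2''
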